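/- Let k be a natural number and x a natural number with 0 < x < 2^k. Then for every natural number t: ⌊(x + t) / 2^k⌋ = ⌊t / 2^k⌋ if and only if t mod 2^k < 2^k − x. Consequently, for a small positive field value x ∈ (0, 2^k) and a mask t without modular overflow, the truncated stochastic sign test faults (declares x 'negative') exactly when t mod 2^k < 2^k − x. -/

import Mathlib

/-- For `0 < x < 2^k` and any mask `t`, the `k`-bit truncations of `x + t` and
`t` agree, `⌊(x + t) / 2^k⌋ = ⌊t / 2^k⌋`, iff `t % 2^k < 2^k - x`.  This
characterizes exactly when the truncated stochastic sign test (PosZero mode)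
faults on a small positive value `x`. -/
theorem truncated_sign_fault_iff_pos_small (k x : ℕ) (hx : 0 < x) (hxk : x < 2 ^ k) :
    ∀ t : ℕ, (x + t) / 2 ^ k = t / 2 ^ k ↔ t % 2 ^ k < 2 ^ k - x := by
  intro t
  have hn : 0 < 2 ^ k := Nat.pow_pos (by norm_num)
  have hdm : 2 ^ k * (t / 2 ^ k) + t % 2 ^ k = t := Nat.div_add_mod t (2 ^ k)
  have hr : t % 2 ^ k < 2 ^ k := Nat.mod_lt t hn
  constructor
  · intro h
    by_contra hge
    push_neg at hge
    have : x + t % 2 ^ k ≥ 2 ^ k := by omega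
    have : (x + t) / 2 ^ k ≥ t / 2 ^ k + 1 := by
      have hm : 2 ^ k * (t / 2 ^ k + 1) = 2 ^ k * (t / 2 ^ k) + 2 ^ k := by ring
      have : 2 ^ k * (t / 2 ^ k + 1) ≤ x + t := by omega
      exact (Nat.le_div_iff_mul_le hn).2 (by rw [Nat.mul_comm]; exact this)
    omega
  · intro h
    have h1 : x + t = 2 ^ k * (t / 2 ^ k) + (x + t % 2 ^ k) := by omega
    have h2 : x + t % 2 ^ k < 2 ^ k := by omega
    rw [h1, Nat.mul_add_div hn, Nat.div_eq_of_lt h2, Nat.add_zero]
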